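/- (Consistency of the empirical geometric median with exponential rate.) Let (Ỹ, d) be a compact metric space and μ a probability measure on Ỹ. Suppose y* is the unique minimizer of y ↦ ∫ d(y', y) dμ(y'), and that for every y ∈ Ỹ the random variable Z_y := d(Y, y*) − d(Y, y) (with Y ∼ μ) has finite moment generating function on all of ℝ. Let y₁,…,y_m be i.i.d. with law μ and ŷ_m a minimizer of y ↦ (1/m)∑ᵢ d(yᵢ, y). Then for every ε > 0 there exist M ∈ ℕ, K > 0, and η > 0 such that for all m > M, Pr(d(ŷ_m, y*) ≥ ε) ≤ K exp(−mη). -/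

import Mathlib

open MeasureTheory ProbabilityTheory

lemma exp_quad_aux {x : ℝ} (hx : |x| ≤ 1) : Real.exp x ≤ 1 + x + x ^ 2 := by
  have h := Real.exp_bound hx (by norm_num : 0 < 2)
  have hsum : ∑ m ∈ Finset.range 2, x ^ m / (m.factorial : ℝ) = 1 + x := by
    simp [Finset.sum_range_succ]
  rw [hsum] at h
  have h2 := (abs_le.mp h).2
  have h3 : |x| ^ 2 = x ^ 2 := sq_abs x
  simp [Nat.factorial, h3] at h2
  nlinarith [sq_nonneg x]

/-- Consistency of the empirical geometric median with exponential rate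
(main theorem): if y* is the unique population geometric median of μ on a
compact metric space and each Z_y = d(Y,y*) − d(Y,y) has everywhere-finite
moment generating function, then for i.i.d. samples with law μ and empirical
geometric medians ŷ_m, for every ε > 0 there are M, K > 0, η > 0 with
Pr(d(ŷ_m, y*) ≥ ε) ≤ K exp(−mη) for all m > M. -/
theorem stmt13 {Ytil : Type*} [MetricSpace Ytil] [CompactSpace Ytil]
    [Nonempty Ytil] [MeasurableSpace Ytil] [BorelSpace Ytil]
    (μ : Measure Ytil) [IsProbabilityMeasure μ] (ystar : Ytil)
    (huniq : ∀ y : Ytil, y ≠ ystar →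
      (∫ y', dist y' ystar ∂μ) < ∫ y', dist y' y ∂μ)
    (hmgf : ∀ y : Ytil, ∀ l : ℝ,
      Integrable (fun y' => Real.exp (l * (dist y' ystar - dist y' y))) μ)
    {Ω : Type*} [MeasurableSpace Ω] (P : Measure Ω) [IsProbabilityMeasure P]
    (Ys : ℕ → Ω → Ytil) (hmeas : ∀ i, Measurable (Ys i))
    (hindep : iIndepFun Ys P)
    (hlaw : ∀ i, P.map (Ys i) = μ)
    (yhat : ℕ → Ω → Ytil)
    (hmin : ∀ m ω, ∀ y : Ytil,
      (∑ i ∈ Finset.range m, dist (Ys i ω) (yhat m ω)) / m ≤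
        (∑ i ∈ Finset.range m, dist (Ys i ω) y) / m) :
    ∀ ε > (0 : ℝ), ∃ (M : ℕ) (K η : ℝ), 0 < K ∧ 0 < η ∧ ∀ m > M,
      (P {ω | ε ≤ dist (yhat m ω) ystar}).toReal ≤ K * Real.exp (-(m : ℝ) * η) := by
  intro ε hε
  -- a uniform bound `c` on all distances
  set c : ℝ := Metric.diam (Set.univ : Set Ytil) + 1 with hc_def
  have hdiam : 0 ≤ Metric.diam (Set.univ : Set Ytil) := Metric.diam_nonneg
  have hc0 : 0 < c := by simp only [hc_def]; linarith
  have hbdd : ∀ a b : Ytil, dist a b ≤ c := by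
    intro a b
    have := Metric.dist_le_diam_of_mem isCompact_univ.isBounded
      (Set.mem_univ a) (Set.mem_univ b)
    simp only [hc_def]; linarith
  -- continuous functions are integrable
  have hcont_int : ∀ f : Ytil → ℝ, Continuous f → Integrable f μ := fun f hf =>
    hf.integrable_of_hasCompactSupport (HasCompactSupport.of_compactSpace f)
  have hdist_cont : ∀ y : Ytil, Continuous (fun y' => dist y' y) :=
    fun y => Continuous.dist continuous_id continuous_const
  have hdist_int : ∀ y : Ytil, Integrable (fun y' => dist y' y) μ :=
    fun y => hcont_int _ (hdist_cont y)
  -- the bad set S and the gaps δ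
  set S : Set Ytil := {y | ε ≤ dist y ystar} with hS_def
  have hSclosed : IsClosed S :=
    isClosed_le continuous_const (Continuous.dist continuous_id continuous_const)
  have hScompact : IsCompact S := hSclosed.isCompact
  set δ : Ytil → ℝ :=
    fun y => ((∫ y', dist y' y ∂μ) - ∫ y', dist y' ystar ∂μ) / 3 with hδ_def
  have hδpos : ∀ y ∈ S, 0 < δ y := by
    intro y hy
    have hne : y ≠ ystar := by
      intro h
      rw [hS_def] at hy
      simp only [Set.mem_setOf_eq, h, dist_self] at hy
      linarith
    have := huniq y hne
    simp only [hδ_def]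
    linarith
  -- finite subcover of S
  obtain ⟨T, hT⟩ := hScompact.elim_finite_subcover
    (fun j : S => Metric.ball (j : Ytil) (δ (j : Ytil)))
    (fun j => Metric.isOpen_ball)
    (fun y hy => Set.mem_iUnion.mpr ⟨⟨y, hy⟩, Metric.mem_ball_self (hδpos y hy)⟩)
  by_cases hT_ne : T.Nonempty
  swap
  · -- S must be empty; the bad event is empty
    refine ⟨0, 1, 1, one_pos, one_pos, fun m _ => ?_⟩
    have hempty : {ω | ε ≤ dist (yhat m ω) ystar} = ∅ := by
      ext ω
      simp only [Set.mem_setOf_eq, Set.mem_empty_iff_false, iff_false]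
      intro h
      have hωS : yhat m ω ∈ S := h
      have := hT hωS
      rw [Finset.not_nonempty_iff_eq_empty.mp hT_ne] at this
      simp at this
    rw [hempty]
    simp only [measure_empty, ENNReal.toReal_zero, one_mul]
    positivity
  -- the functions z y and the Chernoff parameters τ
  set z : Ytil → Ytil → ℝ := fun y y' => dist y' ystar - dist y' y with hz_def
  have hz_cont : ∀ y, Continuous (z y) :=
    fun y => (hdist_cont ystar).sub (hdist_cont y)
  have hz_bdd : ∀ y y', |z y y'| ≤ c := by
    intro y y'
    have h1 : |dist ystar y' - dist y y'| ≤ dist ystar y := abs_dist_sub_le ystar y y'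
    have h2 := hbdd ystar y
    simp only [hz_def]
    rw [dist_comm y' ystar, dist_comm y' y]
    linarith
  set τ : Ytil → ℝ := fun y => min (1 / c) (δ y / c ^ 2) with hτ_def
  have hτpos : ∀ y ∈ S, 0 < τ y := by
    intro y hy
    exact lt_min (by positivity) (by have := hδpos y hy; positivity)
  have hτc : ∀ y, τ y * c ≤ 1 := by
    intro y
    have h1 : τ y ≤ 1 / c := min_le_left _ _
    calc τ y * c ≤ (1 / c) * c := by
          exact mul_le_mul_of_nonneg_right h1 hc0.le
      _ = 1 := by field_simp
  have hτc2 : ∀ y, τ y * c ^ 2 ≤ δ y := by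
    intro y
    have h1 : τ y ≤ δ y / c ^ 2 := min_le_right _ _
    calc τ y * c ^ 2 ≤ (δ y / c ^ 2) * c ^ 2 := by
          exact mul_le_mul_of_nonneg_right h1 (by positivity)
      _ = δ y := by field_simp
  -- expectation of z
  have hz_int_eq : ∀ y, ∫ y', z y y' ∂μ = -(3 * δ y) := by
    intro y
    simp only [hz_def]
    rw [integral_sub (hdist_int ystar) (hdist_int y)]
    simp only [hδ_def]
    ring
  -- bound for the one-sample mgf
  have hmgf_bound : ∀ y ∈ S,
      (∫ y', Real.exp (τ y * z y y') ∂μ) ≤ Real.exp (-(2 * δ y * τ y)) := by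
    intro y hy
    have hτ := hτpos y hy
    have hint1 : Integrable (fun y' => Real.exp (τ y * z y y')) μ := hmgf y (τ y)
    have hzint : Integrable (fun y' => τ y * z y y') μ :=
      (hcont_int _ (hz_cont y)).const_mul _
    have ha : Integrable (fun y' => (1 : ℝ) + τ y * z y y') μ :=
      (integrable_const 1).add hzint
    have hint2 : Integrable (fun y' => 1 + τ y * z y y' + (τ y) ^ 2 * c ^ 2) μ :=
      ha.add (integrable_const _)
    have hptwise : ∀ y', Real.exp (τ y * z y y') ≤ 1 + τ y * z y y' + (τ y) ^ 2 * c ^ 2 := by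
      intro y'
      have habs : |τ y * z y y'| ≤ 1 := by
        rw [abs_mul, abs_of_pos hτ]
        calc τ y * |z y y'| ≤ τ y * c :=
              mul_le_mul_of_nonneg_left (hz_bdd y y') hτ.le
          _ ≤ 1 := hτc y
      refine (exp_quad_aux habs).trans ?_
      have hzc := abs_le.mp (hz_bdd y y')
      have hsq : (τ y * z y y') ^ 2 ≤ (τ y) ^ 2 * c ^ 2 := by
        rw [mul_pow]
        have : (z y y') ^ 2 ≤ c ^ 2 := sq_le_sq' hzc.1 hzc.2
        exact mul_le_mul_of_nonneg_left this (by positivity)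
      linarith
    have hmono := integral_mono hint1 hint2 hptwise
    refine hmono.trans ?_
    rw [integral_add ha (integrable_const _),
      integral_add (integrable_const (1 : ℝ)) hzint,
      integral_const, integral_const, integral_const_mul, hz_int_eq y]
    simp only [measure_univ, ENNReal.toReal_one, smul_eq_mul, one_mul, probReal_univ]
    have h1 : (τ y) ^ 2 * c ^ 2 ≤ δ y * τ y := by
      have h2 := hτc2 y
      nlinarith [hτ.le]
    have h3 := Real.add_one_le_exp (-(2 * δ y * τ y))
    nlinarith [hδpos y hy, hτ]
  -- Chernoff bound for each center
  have hcher : ∀ y ∈ S, ∀ m : ℕ,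
      (P {ω | -((m : ℝ) * δ y) ≤ ∑ i ∈ Finset.range m, z y (Ys i ω)}).toReal
        ≤ Real.exp (-(m : ℝ) * (δ y * τ y)) := by
    intro y hy m
    have hτ := hτpos y hy
    have hzm : Measurable (z y) := (hz_cont y).measurable
    have hXmeas : Measurable (fun ω => ∑ i ∈ Finset.range m, z y (Ys i ω)) :=
      Finset.measurable_sum _ (fun i _ => hzm.comp (hmeas i))
    have hint : Integrable
        (fun ω => Real.exp (τ y * ∑ i ∈ Finset.range m, z y (Ys i ω))) P := by
      refine (integrable_const (Real.exp (τ y * ((m : ℝ) * c)))).mono'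
        ((hXmeas.const_mul _).exp.aestronglyMeasurable) (ae_of_all _ fun ω => ?_)
      rw [Real.norm_eq_abs, Real.abs_exp]
      apply Real.exp_le_exp.mpr
      apply mul_le_mul_of_nonneg_left _ hτ.le
      calc ∑ i ∈ Finset.range m, z y (Ys i ω)
          ≤ ∑ _i ∈ Finset.range m, c :=
            Finset.sum_le_sum fun i _ => le_of_abs_le (hz_bdd y (Ys i ω))
        _ = (m : ℝ) * c := by
            rw [Finset.sum_const, Finset.card_range, nsmul_eq_mul]
    have hch := measure_ge_le_exp_mul_mgf
      (X := fun ω => ∑ i ∈ Finset.range m, z y (Ys i ω)) (μ := P) (t := τ y)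
      (-((m : ℝ) * δ y)) hτ.le hint
    refine hch.trans ?_
    -- compute the mgf of the sum
    have hXeq : (fun ω => ∑ i ∈ Finset.range m, z y (Ys i ω))
        = ∑ i ∈ Finset.range m, (z y ∘ Ys i) := by
      ext ω
      simp [Finset.sum_apply]
    have hindep' : iIndepFun (fun i => z y ∘ Ys i) P :=
      hindep.comp _ (fun _ => hzm)
    have hmgf_sum : mgf (fun ω => ∑ i ∈ Finset.range m, z y (Ys i ω)) P (τ y)
        = ∏ i ∈ Finset.range m, mgf (z y ∘ Ys i) P (τ y) := by
      rw [hXeq]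
      exact hindep'.mgf_sum (fun i => hzm.comp (hmeas i)) _
    have hmgf_i : ∀ i : ℕ, mgf (z y ∘ Ys i) P (τ y)
        = ∫ y', Real.exp (τ y * z y y') ∂μ := by
      intro i
      have hsm : AEStronglyMeasurable (fun y' => Real.exp (τ y * z y y'))
          (Measure.map (Ys i) P) :=
        (Real.continuous_exp.comp (continuous_const.mul (hz_cont y))).aestronglyMeasurable
      have hι := integral_map (hmeas i).aemeasurable hsm
      rw [mgf, ← hlaw i, hι]
      rfl
    have hprod : ∏ i ∈ Finset.range m, mgf (z y ∘ Ys i) P (τ y)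
        ≤ Real.exp (-(2 * δ y * τ y)) ^ m := by
      rw [Finset.prod_congr rfl (fun i _ => hmgf_i i), Finset.prod_const, Finset.card_range]
      exact pow_le_pow_left₀ (integral_nonneg fun y' => (Real.exp_pos _).le)
        (hmgf_bound y hy) m
    rw [hmgf_sum]
    calc Real.exp (-(τ y) * -((m : ℝ) * δ y))
          * ∏ i ∈ Finset.range m, mgf (z y ∘ Ys i) P (τ y)
        ≤ Real.exp (-(τ y) * -((m : ℝ) * δ y)) * Real.exp (-(2 * δ y * τ y)) ^ m :=
          mul_le_mul_of_nonneg_left hprod (Real.exp_pos _).le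
      _ = Real.exp (-(m : ℝ) * (δ y * τ y)) := by
          rw [← Real.exp_nat_mul, ← Real.exp_add]
          congr 1
          ring
  -- the rate η and constant K
  set η : ℝ := T.inf' hT_ne (fun j => δ (j : Ytil) * τ (j : Ytil)) with hη_def
  have hηpos : 0 < η := by
    rw [hη_def, Finset.lt_inf'_iff]
    exact fun j _ => mul_pos (hδpos _ j.2) (hτpos _ j.2)
  refine ⟨0, T.card, η, by exact_mod_cast Finset.card_pos.mpr hT_ne, hηpos, fun m hm => ?_⟩
  -- event inclusion
  have hincl : {ω | ε ≤ dist (yhat m ω) ystar} ⊆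
      ⋃ j ∈ T, {ω | -((m : ℝ) * δ (j : Ytil))
        ≤ ∑ i ∈ Finset.range m, z (j : Ytil) (Ys i ω)} := by
    intro ω hω
    have hωS : yhat m ω ∈ S := hω
    have hcov := hT hωS
    rw [Set.mem_iUnion₂] at hcov
    obtain ⟨j, hjT, hjball⟩ := hcov
    refine Set.mem_biUnion hjT ?_
    simp only [Set.mem_setOf_eq]
    have hm0 : (0 : ℝ) < m := by exact_mod_cast hm
    have hmin' : ∑ i ∈ Finset.range m, dist (Ys i ω) (yhat m ω)
        ≤ ∑ i ∈ Finset.range m, dist (Ys i ω) ystar := by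
      have h := hmin m ω ystar
      exact (div_le_div_iff_of_pos_right hm0).mp h
    have hball : dist (yhat m ω) (j : Ytil) < δ (j : Ytil) := Metric.mem_ball.mp hjball
    have htri : ∑ i ∈ Finset.range m, dist (Ys i ω) (j : Ytil)
        ≤ (∑ i ∈ Finset.range m, dist (Ys i ω) (yhat m ω)) + (m : ℝ) * δ (j : Ytil) := by
      calc ∑ i ∈ Finset.range m, dist (Ys i ω) (j : Ytil)
          ≤ ∑ i ∈ Finset.range m, (dist (Ys i ω) (yhat m ω) + δ (j : Ytil)) := by
            refine Finset.sum_le_sum fun i _ => ?_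
            have h1 := dist_triangle (Ys i ω) (yhat m ω) (j : Ytil)
            linarith
        _ = (∑ i ∈ Finset.range m, dist (Ys i ω) (yhat m ω)) + (m : ℝ) * δ (j : Ytil) := by
            rw [Finset.sum_add_distrib, Finset.sum_const, Finset.card_range, nsmul_eq_mul]
    have hzsum : ∑ i ∈ Finset.range m, z (j : Ytil) (Ys i ω)
        = (∑ i ∈ Finset.range m, dist (Ys i ω) ystar)
          - ∑ i ∈ Finset.range m, dist (Ys i ω) (j : Ytil) := by
      simp only [hz_def]
      rw [Finset.sum_sub_distrib]
    linarith
  -- union bound and conclusion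
  have h1 : P {ω | ε ≤ dist (yhat m ω) ystar}
      ≤ ∑ j ∈ T, P {ω | -((m : ℝ) * δ (j : Ytil))
        ≤ ∑ i ∈ Finset.range m, z (j : Ytil) (Ys i ω)} :=
    (measure_mono hincl).trans (measure_biUnion_finset_le T _)
  have hfin : ∀ j ∈ T, P {ω | -((m : ℝ) * δ (j : Ytil))
      ≤ ∑ i ∈ Finset.range m, z (j : Ytil) (Ys i ω)} ≠ ⊤ :=
    fun j _ => measure_ne_top P _
  calc (P {ω | ε ≤ dist (yhat m ω) ystar}).toReal
      ≤ (∑ j ∈ T, P {ω | -((m : ℝ) * δ (j : Ytil))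
          ≤ ∑ i ∈ Finset.range m, z (j : Ytil) (Ys i ω)}).toReal := by
        refine ENNReal.toReal_mono ?_ h1
        exact (ENNReal.sum_lt_top.mpr fun j hj => (hfin j hj).lt_top).ne
    _ = ∑ j ∈ T, (P {ω | -((m : ℝ) * δ (j : Ytil))
          ≤ ∑ i ∈ Finset.range m, z (j : Ytil) (Ys i ω)}).toReal :=
        ENNReal.toReal_sum hfin
    _ ≤ ∑ j ∈ T, Real.exp (-(m : ℝ) * (δ (j : Ytil) * τ (j : Ytil))) :=
        Finset.sum_le_sum fun j _ => hcher _ j.2 m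
    _ ≤ ∑ _j ∈ T, Real.exp (-(m : ℝ) * η) := by
        refine Finset.sum_le_sum fun j hj => ?_
        apply Real.exp_le_exp.mpr
        have hle : η ≤ δ (j : Ytil) * τ (j : Ytil) := Finset.inf'_le _ hj
        have hm0 : (0 : ℝ) ≤ m := Nat.cast_nonneg m
        nlinarith
    _ = (T.card : ℝ) * Real.exp (-(m : ℝ) * η) := by
        rw [Finset.sum_const, nsmul_eq_mul]
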